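/- Let T > 0, let σ : [0,T] → (0,∞) and q_S, γ_S : [0,T] → ℝ be continuous, let r_G ≥ 0 and μ > 2, and let 𝔎 be the kernel 𝔎(x,y;t,s) = e^{−r_G(t−s)} (4π[𝒮(t)−𝒮(s)])^{−1/2} exp(−(x−y+ℛ(t)−ℛ(s))²/(4[𝒮(t)−𝒮(s)])), where 𝒮(t) = (1/2)∫₀ᵗ σ(τ)² dτ and ℛ(t) = ∫₀ᵗ (q_S(τ) − γ_S(τ) − (1/2)σ(τ)²) dτ. Then for every 0 ≤ s < t ≤ T there exists a constant C = C(t,s,μ,σ,q_S,γ_S,r_G) < ∞ such that for every v ∈ H = L²(ℝ, e^{−μ|x|}dx), the integral (𝔗(t,s)v)(x) = ∫_ℝ 𝔎(x,y;t,s) v(y) dy converges absolutely for almost every x ∈ ℝ, the function 𝔗(t,s)v belongs to H, and ‖𝔗(t,s)v‖_H ≤ C ‖v‖_H. -/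

import Mathlib

open Real Set MeasureTheory intervalIntegral
open scoped ENNReal NNReal

/-- `𝒮(t) = (1/2)∫₀ᵗ σ(τ)² dτ`. -/
noncomputable def Sfun (sigma : ℝ → ℝ) (t : ℝ) : ℝ :=
  (1/2) * ∫ τ in (0:ℝ)..t, (sigma τ) ^ 2

/-- `ℛ(t) = ∫₀ᵗ (q_S(τ) − γ_S(τ) − (1/2)σ(τ)²) dτ`. -/
noncomputable def Rfun (sigma qS gammaS : ℝ → ℝ) (t : ℝ) : ℝ :=
  ∫ τ in (0:ℝ)..t, (qS τ - gammaS τ - (1/2) * (sigma τ) ^ 2)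

/-- The kernel
`𝔎(x,y;t,s) = e^{−r_G(t−s)} (4π[𝒮(t)−𝒮(s)])^{−1/2}
  exp(−(x−y+ℛ(t)−ℛ(s))²/(4[𝒮(t)−𝒮(s)]))`
of the evolutionary family generated by the Black–Scholes operator minus `r_G`. -/
noncomputable def Kker (sigma qS gammaS : ℝ → ℝ) (rG : ℝ) (x y t s : ℝ) : ℝ :=
  Real.exp (-rG * (t - s)) / Real.sqrt (4 * Real.pi * (Sfun sigma t - Sfun sigma s))
    * Real.exp (-((x - y + Rfun sigma qS gammaS t - Rfun sigma qS gammaS s) ^ 2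
        / (4 * (Sfun sigma t - Sfun sigma s))))


lemma aux_gauss_lin (b d : ℝ) (hb : 0 < b) :
    Integrable (fun z : ℝ => Real.exp (-b * z ^ 2 + d * z)) := by
  have h : (fun z : ℝ => Real.exp (-b * z ^ 2 + d * z))
      = fun z => Real.exp (d ^ 2 / (4 * b)) * Real.exp (-b * (z - d / (2 * b)) ^ 2) := by
    funext z
    rw [← Real.exp_add]
    congr 1
    field_simp
    ring
  rw [h]
  exact ((integrable_exp_neg_mul_sq hb).comp_sub_right (d / (2 * b))).const_mul _

lemma aux_gauss_abs (b c d : ℝ) (hb : 0 < b) :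
    Integrable (fun z : ℝ => Real.exp (-b * (z + c) ^ 2) * Real.exp (d * |z|)) := by
  have h1 : Integrable (fun z : ℝ =>
      Real.exp (-b * z ^ 2 + (d - 2 * b * c) * z) * Real.exp (-b * c ^ 2)
      + Real.exp (-b * z ^ 2 + (-d - 2 * b * c) * z) * Real.exp (-b * c ^ 2)) :=
    ((aux_gauss_lin b _ hb).mul_const _).add ((aux_gauss_lin b _ hb).mul_const _)
  refine h1.mono' (Continuous.aestronglyMeasurable (by continuity)) ?_
  filter_upwards with z
  rw [Real.norm_eq_abs, abs_of_nonneg (by positivity), ← Real.exp_add]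
  rcases le_or_gt 0 z with hz | hz
  · rw [abs_of_nonneg hz]
    have e1 : -b * (z + c) ^ 2 + d * z = (-b * z ^ 2 + (d - 2 * b * c) * z) + (-b * c ^ 2) := by
      ring
    rw [e1, Real.exp_add]
    exact le_add_of_nonneg_right (by positivity)
  · rw [abs_of_neg hz]
    have e1 : -b * (z + c) ^ 2 + d * -z = (-b * z ^ 2 + (-d - 2 * b * c) * z) + (-b * c ^ 2) := by
      ring
    rw [e1, Real.exp_add]
    exact le_add_of_nonneg_left (by positivity)

/-- Each operator `𝔗(t,s)` of the evolutionary family, given by integration against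
the kernel `𝔎(·,·;t,s)`, is a bounded linear integral operator on the weighted space
`H = L²(ℝ, e^{−μ|x|}dx)`: the defining integral converges absolutely for a.e. `x`,
maps `H` into `H`, and `‖𝔗(t,s)v‖_H ≤ C ‖v‖_H`. -/
theorem stmt_15 (T : ℝ) (hT : 0 < T) (sigma qS gammaS : ℝ → ℝ)
    (hsigmac : ContinuousOn sigma (Set.Icc 0 T))
    (hsigmapos : ∀ t ∈ Set.Icc (0:ℝ) T, 0 < sigma t)
    (hqc : ContinuousOn qS (Set.Icc 0 T)) (hgc : ContinuousOn gammaS (Set.Icc 0 T))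
    (rG : ℝ) (hrG : 0 ≤ rG) (mu : ℝ) (hmu : 2 < mu)
    (s t : ℝ) (hs : 0 ≤ s) (hst : s < t) (htT : t ≤ T) :
    ∃ C : ℝ, 0 ≤ C ∧ ∀ v : ℝ → ℝ,
      MeasureTheory.MemLp v 2
        (MeasureTheory.volume.withDensity
          (fun x : ℝ => ENNReal.ofReal (Real.exp (-mu * |x|)))) →
      (∀ᵐ x : ℝ,
        MeasureTheory.Integrable (fun y : ℝ => Kker sigma qS gammaS rG x y t s * v y)) ∧
      MeasureTheory.MemLp (fun x : ℝ => ∫ y : ℝ, Kker sigma qS gammaS rG x y t s * v y) 2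
        (MeasureTheory.volume.withDensity
          (fun x : ℝ => ENNReal.ofReal (Real.exp (-mu * |x|)))) ∧
      MeasureTheory.eLpNorm
          (fun x : ℝ => ∫ y : ℝ, Kker sigma qS gammaS rG x y t s * v y) 2
          (MeasureTheory.volume.withDensity
            (fun x : ℝ => ENNReal.ofReal (Real.exp (-mu * |x|))))
        ≤ ENNReal.ofReal C *
          MeasureTheory.eLpNorm v 2
            (MeasureTheory.volume.withDensity
              (fun x : ℝ => ENNReal.ofReal (Real.exp (-mu * |x|)))) := by
  -- positivity of the diffusion scale
  have hS : 0 < Sfun sigma t - Sfun sigma s := by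
    have hci : ContinuousOn (fun τ => (sigma τ) ^ 2) (Set.Icc 0 T) := hsigmac.pow 2
    have hi1 : IntervalIntegrable (fun τ => sigma τ ^ 2) volume 0 s := by
      apply (hci.mono ?_).intervalIntegrable
      rw [uIcc_of_le hs]
      exact Icc_subset_Icc le_rfl (hst.le.trans htT)
    have hi2 : IntervalIntegrable (fun τ => sigma τ ^ 2) volume s t := by
      apply (hci.mono ?_).intervalIntegrable
      rw [uIcc_of_le hst.le]
      exact Icc_subset_Icc hs htT
    have hsplit : (∫ τ in (0:ℝ)..s, sigma τ ^ 2) + ∫ τ in s..t, sigma τ ^ 2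
        = ∫ τ in (0:ℝ)..t, sigma τ ^ 2 := integral_add_adjacent_intervals hi1 hi2
    have hpos2 : 0 < ∫ τ in s..t, sigma τ ^ 2 := by
      refine intervalIntegral_pos_of_pos_on hi2 (fun x hx => ?_) hst
      exact pow_pos (hsigmapos x ⟨hs.trans hx.1.le, hx.2.le.trans htT⟩) 2
    simp only [Sfun]
    linarith
  set S : ℝ := Sfun sigma t - Sfun sigma s with hSdef
  set R : ℝ := Rfun sigma qS gammaS t - Rfun sigma qS gammaS s with hRdef
  set A : ℝ := Real.exp (-rG * (t - s)) / Real.sqrt (4 * Real.pi * S) with hAdef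
  have hA : 0 < A := by
    apply div_pos (Real.exp_pos _)
    apply Real.sqrt_pos.mpr
    have := Real.pi_pos
    positivity
  set G : ℝ → ℝ := fun z => A * Real.exp (-((z + R) ^ 2 / (4 * S))) with hGdef
  have hGpos : ∀ z, 0 < G z := fun z => mul_pos hA (Real.exp_pos _)
  have hGcont : Continuous G := by
    apply continuous_const.mul
    apply Real.continuous_exp.comp
    exact (((continuous_id.add continuous_const).pow 2).div_const (4 * S)).neg
  have hKG : ∀ x y : ℝ, Kker sigma qS gammaS rG x y t s = G (x - y) := by
    intro x y
    simp only [Kker, hGdef]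
    rw [show x - y + Rfun sigma qS gammaS t - Rfun sigma qS gammaS s = (x - y) + R from by
      rw [hRdef]; ring]
  set Phi : ℝ → ℝ := fun z => G z * Real.exp (mu / 2 * |z|) with hPhidef
  have hPhipos : ∀ z, 0 < Phi z := fun z => mul_pos (hGpos z) (Real.exp_pos _)
  have hPhicont : Continuous Phi :=
    hGcont.mul (Real.continuous_exp.comp (continuous_const.mul continuous_abs))
  have hPhiint : Integrable Phi := by
    have h := (aux_gauss_abs (1 / (4 * S)) R (mu / 2) (by positivity)).const_mul A
    have he : Phi = fun z =>
        A * (Real.exp (-(1 / (4 * S)) * (z + R) ^ 2) * Real.exp (mu / 2 * |z|)) := by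
      funext z
      simp only [hPhidef, hGdef]
      rw [show -((z + R) ^ 2 / (4 * S)) = -(1 / (4 * S)) * (z + R) ^ 2 from by ring]
      ring
    rw [he]
    exact h
  set C0 : ℝ≥0∞ := ∫⁻ z, ENNReal.ofReal (Phi z) with hC0def
  have hPhim : Measurable fun z => ENNReal.ofReal (Phi z) :=
    ENNReal.measurable_ofReal.comp hPhicont.measurable
  have hC0top : C0 ≠ ∞ := by
    have h1 : C0 ≤ ∫⁻ z, (‖Phi z‖₊ : ℝ≥0∞) := by
      refine lintegral_mono fun z => ?_
      rw [← enorm_eq_nnnorm, Real.enorm_eq_ofReal (hPhipos z).le]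
    exact (h1.trans_lt hPhiint.2).ne
  have hC0lt : C0 < ∞ := lt_top_iff_ne_top.mpr hC0top
  set W : ℝ → ℝ≥0∞ := fun x => ENNReal.ofReal (Real.exp (-mu * |x|)) with hWdef
  have hWm : Measurable W :=
    ENNReal.measurable_ofReal.comp
      (Real.continuous_exp.comp (continuous_const.mul continuous_abs : Continuous fun x : ℝ => -mu * |x|)).measurable
  have hW0 : ∀ x, W x ≠ 0 := fun x => (ENNReal.ofReal_pos.mpr (Real.exp_pos _)).ne'
  have hWtop : ∀ x, W x ≠ ∞ := fun x => ENNReal.ofReal_ne_top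
  set P : ℝ → ℝ≥0∞ := fun x => ENNReal.ofReal (Real.exp (mu / 2 * |x|)) with hPdef
  have hPm : Measurable P :=
    ENNReal.measurable_ofReal.comp
      (Real.continuous_exp.comp (continuous_const.mul continuous_abs : Continuous fun x : ℝ => mu / 2 * |x|)).measurable
  have hP0 : ∀ x, P x ≠ 0 := fun x => (ENNReal.ofReal_pos.mpr (Real.exp_pos _)).ne'
  have hPtop : ∀ x, P x ≠ ∞ := fun x => ENNReal.ofReal_ne_top
  have hPinvtop : ∀ x, (P x)⁻¹ ≠ ∞ := fun x => ENNReal.inv_ne_top.mpr (hP0 x)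
  have hPinv : ∀ x, (P x)⁻¹ = ENNReal.ofReal (Real.exp (-(mu / 2 * |x|))) := by
    intro x
    rw [Real.exp_neg, ENNReal.ofReal_inv_of_pos (Real.exp_pos _)]
  have hWP : ∀ x, W x * P x = (P x)⁻¹ := by
    intro x
    have h1 : Real.exp (-mu * |x|) * Real.exp (mu / 2 * |x|)
        = Real.exp (-(mu / 2 * |x|)) := by
      rw [← Real.exp_add]
      congr 1
      ring
    rw [hPinv x]
    calc W x * P x = ENNReal.ofReal (Real.exp (-mu * |x|) * Real.exp (mu / 2 * |x|)) :=
          (ENNReal.ofReal_mul (Real.exp_pos _).le).symm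
      _ = ENNReal.ofReal (Real.exp (-(mu / 2 * |x|))) := by rw [h1]
  have hPP : ∀ x, (P x)⁻¹ * (P x)⁻¹ = W x := by
    intro x
    calc (P x)⁻¹ * (P x)⁻¹ = (W x * P x) * (P x)⁻¹ := by rw [hWP]
      _ = W x * (P x * (P x)⁻¹) := by ring
      _ = W x := by rw [ENNReal.mul_inv_cancel (hP0 x) (hPtop x), mul_one]
  set k : ℝ → ℝ → ℝ≥0∞ := fun x y => ENNReal.ofReal (G (x - y)) with hkdef
  have hk2 : Measurable (fun z : ℝ × ℝ => k z.1 z.2) :=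
    ENNReal.measurable_ofReal.comp (hGcont.measurable.comp (measurable_fst.sub measurable_snd))
  have hkxm : ∀ x, Measurable (fun y => k x y) := fun x =>
    ENNReal.measurable_ofReal.comp (hGcont.measurable.comp (measurable_const.sub measurable_id))
  have hk0 : ∀ x y, k x y ≠ 0 := fun x y => (ENNReal.ofReal_pos.mpr (hGpos _)).ne'
  have hktop : ∀ x y, k x y ≠ ∞ := fun x y => ENNReal.ofReal_ne_top
  -- the triangle-type inequality
  have habs : ∀ x y : ℝ, |y| ≤ |x - y| + |x| := by
    intro x y
    have h := abs_sub_le y x 0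
    simp only [sub_zero] at h
    calc |y| ≤ |y - x| + |x| := h
      _ = |x - y| + |x| := by rw [abs_sub_comm]
  have hmu2 : (0:ℝ) ≤ mu / 2 := by linarith
  have hkey1 : ∀ x y, k x y * P y ≤ ENNReal.ofReal (Phi (x - y)) * P x := by
    intro x y
    calc k x y * P y = ENNReal.ofReal (G (x - y) * Real.exp (mu / 2 * |y|)) :=
          (ENNReal.ofReal_mul (hGpos _).le).symm
      _ ≤ ENNReal.ofReal (Phi (x - y) * Real.exp (mu / 2 * |x|)) := by
          apply ENNReal.ofReal_le_ofReal
          simp only [hPhidef]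
          calc G (x - y) * Real.exp (mu / 2 * |y|)
              ≤ G (x - y) * (Real.exp (mu / 2 * |x - y|) * Real.exp (mu / 2 * |x|)) := by
                apply mul_le_mul_of_nonneg_left _ (hGpos _).le
                rw [← Real.exp_add]
                apply Real.exp_le_exp.mpr
                nlinarith [mul_le_mul_of_nonneg_left (habs x y) hmu2]
            _ = G (x - y) * Real.exp (mu / 2 * |x - y|) * Real.exp (mu / 2 * |x|) := by ring
      _ = ENNReal.ofReal (Phi (x - y)) * P x :=
          ENNReal.ofReal_mul (hPhipos _).le
  have hkey2 : ∀ x y, k x y * (P x)⁻¹ ≤ ENNReal.ofReal (Phi (x - y)) * (P y)⁻¹ := by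
    intro x y
    rw [hPinv x, hPinv y]
    calc k x y * ENNReal.ofReal (Real.exp (-(mu / 2 * |x|)))
        = ENNReal.ofReal (G (x - y) * Real.exp (-(mu / 2 * |x|))) :=
          (ENNReal.ofReal_mul (hGpos _).le).symm
      _ ≤ ENNReal.ofReal (Phi (x - y) * Real.exp (-(mu / 2 * |y|))) := by
          apply ENNReal.ofReal_le_ofReal
          simp only [hPhidef]
          calc G (x - y) * Real.exp (-(mu / 2 * |x|))
              ≤ G (x - y) * (Real.exp (mu / 2 * |x - y|) * Real.exp (-(mu / 2 * |y|))) := by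
                apply mul_le_mul_of_nonneg_left _ (hGpos _).le
                rw [← Real.exp_add]
                apply Real.exp_le_exp.mpr
                nlinarith [mul_le_mul_of_nonneg_left (habs x y) hmu2]
            _ = G (x - y) * Real.exp (mu / 2 * |x - y|) * Real.exp (-(mu / 2 * |y|)) := by ring
      _ = ENNReal.ofReal (Phi (x - y)) * ENNReal.ofReal (Real.exp (-(mu / 2 * |y|))) :=
          ENNReal.ofReal_mul (hPhipos _).le
  have htrans1 : ∀ x : ℝ, (∫⁻ y, ENNReal.ofReal (Phi (x - y))) = C0 := fun x =>
    (Measure.measurePreserving_sub_left volume x).lintegral_comp hPhim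
  have htrans2 : ∀ y : ℝ, (∫⁻ x, ENNReal.ofReal (Phi (x - y))) = C0 := fun y =>
    (measurePreserving_sub_right volume y).lintegral_comp hPhim
  have hB1 : ∀ x, (∫⁻ y, k x y * P y) ≤ C0 * P x := by
    intro x
    calc (∫⁻ y, k x y * P y) ≤ ∫⁻ y, ENNReal.ofReal (Phi (x - y)) * P x :=
          lintegral_mono fun y => hkey1 x y
      _ = C0 * P x := by
          rw [lintegral_mul_const' (P x) _ (hPtop x), htrans1 x]
  have hB2 : ∀ y, (∫⁻ x, k x y * (P x)⁻¹) ≤ C0 * (P y)⁻¹ := by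
    intro y
    calc (∫⁻ x, k x y * (P x)⁻¹) ≤ ∫⁻ x, ENNReal.ofReal (Phi (x - y)) * (P y)⁻¹ :=
          lintegral_mono fun x => hkey2 x y
      _ = C0 * (P y)⁻¹ := by
          rw [lintegral_mul_const' _ _ (hPinvtop y), htrans2 y]
  refine ⟨C0.toReal, ENNReal.toReal_nonneg, ?_⟩
  intro v hv
  have hofC : ENNReal.ofReal C0.toReal = C0 := ENNReal.ofReal_toReal hC0top
  have hACvol : (volume : Measure ℝ) ≪ volume.withDensity W :=
    withDensity_absolutelyContinuous' hWm.aemeasurable (ae_of_all _ fun x => hW0 x)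
  have hνac : volume.withDensity W ≪ (volume : Measure ℝ) :=
    withDensity_absolutelyContinuous volume W
  have hvv : AEStronglyMeasurable v volume := hv.1.mono_ac hACvol
  set v' : ℝ → ℝ := hvv.mk v with hv'def
  have hv'meas : Measurable v' := hvv.stronglyMeasurable_mk.measurable
  have hv'eq : v =ᵐ[volume] v' := hvv.ae_eq_mk
  have hv'eqnu : v =ᵐ[volume.withDensity W] v' := hv'eq.filter_mono hνac.ae_le
  have hnnv' : Measurable fun y => (‖v' y‖₊ : ℝ≥0∞) := hv'meas.nnnorm.coe_nnreal_ennreal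
  have hv2m : Measurable fun y => (‖v' y‖₊ : ℝ≥0∞) ^ (2:ℝ) :=
    ENNReal.continuous_rpow_const.measurable.comp hnnv'
  have hhalf : ∀ a : ℝ≥0∞, (a ^ (1/2:ℝ)) ^ (2:ℝ) = a := by
    intro a
    rw [← ENNReal.rpow_mul]
    norm_num
  set Nv : ℝ≥0∞ := ∫⁻ y, W y * (‖v' y‖₊ : ℝ≥0∞) ^ (2:ℝ) with hNdef
  have hvN : eLpNorm v 2 (volume.withDensity W) = Nv ^ (1/2 : ℝ) := by
    rw [eLpNorm_eq_lintegral_rpow_enorm_toReal (by norm_num) ENNReal.ofNat_ne_top]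
    simp only [ENNReal.toReal_ofNat]
    congr 1
    calc (∫⁻ x, (‖v x‖₊ : ℝ≥0∞) ^ (2:ℝ) ∂(volume.withDensity W))
        = ∫⁻ x, (‖v' x‖₊ : ℝ≥0∞) ^ (2:ℝ) ∂(volume.withDensity W) :=
          lintegral_congr_ae (hv'eqnu.mono fun x hx => by simp only [hx])
      _ = ∫⁻ x, (W * fun x => (‖v' x‖₊ : ℝ≥0∞) ^ (2:ℝ)) x :=
          lintegral_withDensity_eq_lintegral_mul volume hWm hv2m
      _ = Nv := by simp only [Pi.mul_apply]; rfl
  have hNtop : Nv ≠ ∞ := by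
    have h2 := hv.2
    rw [hvN] at h2
    have h3 : (Nv ^ (1/2:ℝ)) ^ (2:ℝ) < ∞ := ENNReal.rpow_lt_top_of_nonneg (by norm_num) h2.ne
    rw [← ENNReal.rpow_mul] at h3
    norm_num at h3
    exact h3.ne
  set F : ℝ → ℝ≥0∞ := fun x => ∫⁻ y, k x y * (‖v' y‖₊ : ℝ≥0∞) with hFdef
  set H : ℝ → ℝ≥0∞ := fun x => ∫⁻ y, k x y * (P y)⁻¹ * (‖v' y‖₊ : ℝ≥0∞) ^ (2:ℝ) with hHdef
  have hFm : Measurable F :=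
    Measurable.lintegral_prod_right' (hk2.mul (hnnv'.comp measurable_snd))
  have h22 : Real.HolderConjugate 2 2 := Real.HolderConjugate.two_two
  have hCS : ∀ x, F x ≤ (C0 * P x) ^ (1/2:ℝ) * (H x) ^ (1/2:ℝ) := by
    intro x
    have hfm : AEMeasurable (fun y => (k x y * P y) ^ (1/2:ℝ)) volume :=
      (ENNReal.continuous_rpow_const.measurable.comp ((hkxm x).mul hPm)).aemeasurable
    have hgm : AEMeasurable (fun y => (k x y * (P y)⁻¹) ^ (1/2:ℝ) * (‖v' y‖₊ : ℝ≥0∞)) volume :=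
      ((ENNReal.continuous_rpow_const.measurable.comp
        ((hkxm x).mul hPm.inv)).mul hnnv').aemeasurable
    have hP12 : ∀ y : ℝ, P y ^ (1/2:ℝ) ≠ 0 := by
      intro y
      simp [ENNReal.rpow_eq_zero_iff, hP0 y, hPtop y]
    have hP12t : ∀ y : ℝ, P y ^ (1/2:ℝ) ≠ ∞ := fun y =>
      ENNReal.rpow_ne_top_of_nonneg (by norm_num) (hPtop y)
    have key : ∀ y, ((fun y => (k x y * P y) ^ (1/2:ℝ))
        * fun y => (k x y * (P y)⁻¹) ^ (1/2:ℝ) * (‖v' y‖₊ : ℝ≥0∞)) y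
        = k x y * (‖v' y‖₊ : ℝ≥0∞) := by
      intro y
      simp only [Pi.mul_apply]
      rw [ENNReal.mul_rpow_of_nonneg _ _ (by norm_num : (0:ℝ) ≤ 1/2),
        ENNReal.mul_rpow_of_nonneg _ _ (by norm_num : (0:ℝ) ≤ 1/2),
        ENNReal.inv_rpow]
      calc k x y ^ (1/2:ℝ) * P y ^ (1/2:ℝ) * ((k x y ^ (1/2:ℝ) * (P y ^ (1/2:ℝ))⁻¹)
            * (‖v' y‖₊ : ℝ≥0∞))
          = (k x y ^ (1/2:ℝ) * k x y ^ (1/2:ℝ)) * (P y ^ (1/2:ℝ) * (P y ^ (1/2:ℝ))⁻¹)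
            * (‖v' y‖₊ : ℝ≥0∞) := by ring
        _ = k x y * (‖v' y‖₊ : ℝ≥0∞) := by
            rw [← ENNReal.rpow_add _ _ (hk0 x y) (hktop x y),
              ENNReal.mul_inv_cancel (hP12 y) (hP12t y)]
            norm_num
    calc F x = ∫⁻ y, ((fun y => (k x y * P y) ^ (1/2:ℝ))
          * fun y => (k x y * (P y)⁻¹) ^ (1/2:ℝ) * (‖v' y‖₊ : ℝ≥0∞)) y :=
          lintegral_congr fun y => (key y).symm
      _ ≤ (∫⁻ y, ((k x y * P y) ^ (1/2:ℝ)) ^ (2:ℝ)) ^ (1/(2:ℝ))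
          * (∫⁻ y, ((k x y * (P y)⁻¹) ^ (1/2:ℝ) * (‖v' y‖₊ : ℝ≥0∞)) ^ (2:ℝ)) ^ (1/(2:ℝ)) :=
          ENNReal.lintegral_mul_le_Lp_mul_Lq volume h22 hfm hgm
      _ = (∫⁻ y, k x y * P y) ^ (1/2:ℝ)
          * (∫⁻ y, k x y * (P y)⁻¹ * (‖v' y‖₊ : ℝ≥0∞) ^ (2:ℝ)) ^ (1/2:ℝ) := by
          congr 1
          · congr 1
            exact lintegral_congr fun y => hhalf _
          · congr 1
            refine lintegral_congr fun y => ?_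
            rw [ENNReal.mul_rpow_of_nonneg _ _ (by norm_num : (0:ℝ) ≤ 2), hhalf]
      _ ≤ (C0 * P x) ^ (1/2:ℝ) * (H x) ^ (1/2:ℝ) :=
          mul_le_mul_left (ENNReal.rpow_le_rpow (hB1 x) (by norm_num)) _
  have hsq : ∀ x, F x ^ (2:ℝ) ≤ C0 * P x * H x := by
    intro x
    calc F x ^ (2:ℝ) ≤ ((C0 * P x) ^ (1/2:ℝ) * H x ^ (1/2:ℝ)) ^ (2:ℝ) :=
          ENNReal.rpow_le_rpow (hCS x) (by norm_num)
      _ = C0 * P x * H x := by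
          rw [ENNReal.mul_rpow_of_nonneg _ _ (by norm_num : (0:ℝ) ≤ 2), hhalf, hhalf]
  have hswapmeas : AEMeasurable (fun z : ℝ × ℝ =>
      (P z.1)⁻¹ * (k z.1 z.2 * (P z.2)⁻¹ * (‖v' z.2‖₊ : ℝ≥0∞) ^ (2:ℝ)))
      (volume.prod volume) := by
    apply Measurable.aemeasurable
    exact ((hPm.comp measurable_fst).inv).mul
      ((hk2.mul ((hPm.comp measurable_snd).inv)).mul (hv2m.comp measurable_snd))
  have hJ : (∫⁻ x, W x * F x ^ (2:ℝ)) ≤ C0 * (C0 * Nv) := by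
    calc (∫⁻ x, W x * F x ^ (2:ℝ)) ≤ ∫⁻ x, W x * (C0 * P x * H x) :=
          lintegral_mono fun x => mul_le_mul_right (hsq x) _
      _ = ∫⁻ x, C0 * ((P x)⁻¹ * H x) := by
          refine lintegral_congr fun x => ?_
          rw [← hWP x]
          ring
      _ = C0 * ∫⁻ x, (P x)⁻¹ * H x := lintegral_const_mul' _ _ hC0top
      _ ≤ C0 * (C0 * Nv) := by
          apply mul_le_mul_right
          calc (∫⁻ x, (P x)⁻¹ * H x)
              = ∫⁻ x, ∫⁻ y, (P x)⁻¹ * (k x y * (P y)⁻¹ * (‖v' y‖₊ : ℝ≥0∞) ^ (2:ℝ)) :=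
                lintegral_congr fun x => (lintegral_const_mul' _ _ (hPinvtop x)).symm
            _ = ∫⁻ y, ∫⁻ x, (P x)⁻¹ * (k x y * (P y)⁻¹ * (‖v' y‖₊ : ℝ≥0∞) ^ (2:ℝ)) :=
                lintegral_lintegral_swap hswapmeas
            _ = ∫⁻ y, (∫⁻ x, k x y * (P x)⁻¹) * ((P y)⁻¹ * (‖v' y‖₊ : ℝ≥0∞) ^ (2:ℝ)) := by
                refine lintegral_congr fun y => ?_
                rw [← lintegral_mul_const' _ _ (ENNReal.mul_ne_top (hPinvtop y)
                  (ENNReal.rpow_ne_top_of_nonneg (by norm_num) ENNReal.coe_ne_top))]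
                exact lintegral_congr fun x => by ring
            _ ≤ ∫⁻ y, (C0 * (P y)⁻¹) * ((P y)⁻¹ * (‖v' y‖₊ : ℝ≥0∞) ^ (2:ℝ)) :=
                lintegral_mono fun y => mul_le_mul_left (hB2 y) _
            _ = ∫⁻ y, C0 * (W y * (‖v' y‖₊ : ℝ≥0∞) ^ (2:ℝ)) := by
                refine lintegral_congr fun y => ?_
                rw [← hPP y]
                ring
            _ = C0 * Nv := lintegral_const_mul' _ _ hC0top
  have hJtop : (∫⁻ x, W x * F x ^ (2:ℝ)) ≠ ∞ :=
    (hJ.trans_lt (ENNReal.mul_lt_top hC0lt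
      (ENNReal.mul_lt_top hC0lt (lt_top_iff_ne_top.mpr hNtop)))).ne
  have hWF2m : Measurable fun x => W x * F x ^ (2:ℝ) :=
    hWm.mul (ENNReal.continuous_rpow_const.measurable.comp hFm)
  have haeF : ∀ᵐ x : ℝ, F x < ∞ := by
    filter_upwards [ae_lt_top hWF2m hJtop] with x hx
    by_contra h
    push_neg at h
    have hFx : F x = ∞ := top_le_iff.mp h
    rw [hFx, ENNReal.top_rpow_of_pos (by norm_num : (0:ℝ) < 2), ENNReal.mul_top (hW0 x)] at hx
    exact absurd hx (lt_irrefl _)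
  -- Part 1: a.e. absolute convergence
  have hint : ∀ᵐ x : ℝ, Integrable (fun y => Kker sigma qS gammaS rG x y t s * v y) := by
    filter_upwards [haeF] with x hFx
    have hmeas : AEStronglyMeasurable (fun y => Kker sigma qS gammaS rG x y t s * v' y)
        volume := by
      apply Measurable.aestronglyMeasurable
      have he : (fun y => Kker sigma qS gammaS rG x y t s * v' y)
          = fun y => G (x - y) * v' y := by
        funext y
        rw [hKG]
      rw [he]
      exact (hGcont.measurable.comp (measurable_const.sub measurable_id)).mul hv'meas
    have hnorm : ∀ y, (‖Kker sigma qS gammaS rG x y t s * v' y‖₊ : ℝ≥0∞)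
        = k x y * (‖v' y‖₊ : ℝ≥0∞) := by
      intro y
      rw [hKG x y, nnnorm_mul, ENNReal.coe_mul, ← enorm_eq_nnnorm (G (x - y)), Real.enorm_eq_ofReal (hGpos _).le]
    have hfin : HasFiniteIntegral (fun y => Kker sigma qS gammaS rG x y t s * v' y) volume := by
      show (∫⁻ y, (‖Kker sigma qS gammaS rG x y t s * v' y‖₊ : ℝ≥0∞)) < ∞
      calc (∫⁻ y, (‖Kker sigma qS gammaS rG x y t s * v' y‖₊ : ℝ≥0∞))
          = F x := lintegral_congr fun y => hnorm y
        _ < ∞ := hFx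
    exact (Integrable.congr ⟨hmeas, hfin⟩ (hv'eq.symm.mono fun y hy => by simp only [hy]))
  -- measurability of the image function
  have hTveq : (fun x => ∫ y, Kker sigma qS gammaS rG x y t s * v y)
      = fun x => ∫ y, Kker sigma qS gammaS rG x y t s * v' y := by
    funext x
    exact integral_congr_ae (hv'eq.mono fun y hy => by simp only [hy])
  have hTv'sm : StronglyMeasurable fun x => ∫ y, Kker sigma qS gammaS rG x y t s * v' y := by
    have hm : StronglyMeasurable fun z : ℝ × ℝ =>
        Kker sigma qS gammaS rG z.1 z.2 t s * v' z.2 := by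
      apply Measurable.stronglyMeasurable
      have he : (fun z : ℝ × ℝ => Kker sigma qS gammaS rG z.1 z.2 t s * v' z.2)
          = fun z : ℝ × ℝ => G (z.1 - z.2) * v' z.2 := by
        funext z
        rw [hKG]
      rw [he]
      exact (hGcont.measurable.comp (measurable_fst.sub measurable_snd)).mul
        (hv'meas.comp measurable_snd)
    exact hm.integral_prod_right'
  have hTvsm : AEStronglyMeasurable (fun x => ∫ y, Kker sigma qS gammaS rG x y t s * v y)
      (volume.withDensity W) := by
    rw [hTveq]
    exact hTv'sm.aestronglyMeasurable.mono_ac hνac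
  have henorm : ∀ x, (‖∫ y, Kker sigma qS gammaS rG x y t s * v' y‖₊ : ℝ≥0∞) ≤ F x := by
    intro x
    rw [← congrFun hTveq x]
    have h1 : ‖∫ y, Kker sigma qS gammaS rG x y t s * v y‖
        ≤ (∫⁻ y, ENNReal.ofReal ‖Kker sigma qS gammaS rG x y t s * v y‖).toReal :=
      norm_integral_le_lintegral_norm _
    calc (‖∫ y, Kker sigma qS gammaS rG x y t s * v y‖₊ : ℝ≥0∞)
        = ENNReal.ofReal ‖∫ y, Kker sigma qS gammaS rG x y t s * v y‖ :=
          (ofReal_norm _).symm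
      _ ≤ ENNReal.ofReal (∫⁻ y, ENNReal.ofReal ‖Kker sigma qS gammaS rG x y t s * v y‖).toReal :=
          ENNReal.ofReal_le_ofReal h1
      _ ≤ ∫⁻ y, ENNReal.ofReal ‖Kker sigma qS gammaS rG x y t s * v y‖ :=
          ENNReal.ofReal_toReal_le
      _ = ∫⁻ y, k x y * (‖v y‖₊ : ℝ≥0∞) := by
          refine lintegral_congr fun y => ?_
          rw [ofReal_norm, enorm_eq_nnnorm, hKG x y, nnnorm_mul, ENNReal.coe_mul,
            ← enorm_eq_nnnorm (G (x - y)), Real.enorm_eq_ofReal (hGpos _).le]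
      _ = F x := lintegral_congr_ae (hv'eq.mono fun y hy => by simp only [hy])
  have hTv2m : Measurable fun x =>
      (‖∫ y, Kker sigma qS gammaS rG x y t s * v' y‖₊ : ℝ≥0∞) ^ (2:ℝ) :=
    ENNReal.continuous_rpow_const.measurable.comp
      hTv'sm.measurable.nnnorm.coe_nnreal_ennreal
  have hkeybound : eLpNorm (fun x => ∫ y, Kker sigma qS gammaS rG x y t s * v y) 2
      (volume.withDensity W) ≤ C0 * Nv ^ (1/2:ℝ) := by
    rw [hTveq, eLpNorm_eq_lintegral_rpow_enorm_toReal (by norm_num) ENNReal.ofNat_ne_top]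
    simp only [ENNReal.toReal_ofNat]
    calc (∫⁻ x, (‖∫ y, Kker sigma qS gammaS rG x y t s * v' y‖₊ : ℝ≥0∞) ^ (2:ℝ)
          ∂(volume.withDensity W)) ^ (1/(2:ℝ))
        = (∫⁻ x, (W * fun x =>
            (‖∫ y, Kker sigma qS gammaS rG x y t s * v' y‖₊ : ℝ≥0∞) ^ (2:ℝ)) x) ^ (1/(2:ℝ)) := by
          rw [lintegral_withDensity_eq_lintegral_mul volume hWm hTv2m]
      _ ≤ (∫⁻ x, W x * F x ^ (2:ℝ)) ^ (1/(2:ℝ)) := by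
          refine ENNReal.rpow_le_rpow (lintegral_mono fun x => ?_) (by norm_num)
          simp only [Pi.mul_apply]
          exact mul_le_mul_right (ENNReal.rpow_le_rpow (henorm x) (by norm_num)) _
      _ ≤ (C0 * (C0 * Nv)) ^ (1/(2:ℝ)) := ENNReal.rpow_le_rpow hJ (by norm_num)
      _ = C0 * Nv ^ (1/2:ℝ) := by
          have hCC : C0 * C0 = C0 ^ (2:ℝ) := by
            rw [show ((2:ℝ)) = ((2:ℕ):ℝ) from by norm_num, ENNReal.rpow_natCast, pow_two]
          rw [← mul_assoc, ENNReal.mul_rpow_of_nonneg _ _ (by norm_num : (0:ℝ) ≤ 1/(2:ℝ)),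
            hCC, ← ENNReal.rpow_mul]
          norm_num
  refine ⟨hint, ⟨hTvsm, ?_⟩, ?_⟩
  · exact lt_of_le_of_lt hkeybound (ENNReal.mul_lt_top hC0lt
      (ENNReal.rpow_lt_top_of_nonneg (by norm_num) hNtop))
  · rw [hofC, hvN]
    exact hkeybound
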